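/- arXiv:2011.13430 — 4 statements merged into one kernel-verified Lean document; each statement's English description precedes it below -/
import Mathlib

section
/- (Excision, Lemma 2.) Let X be a finite set with a finite family (d_i)_{i ∈ I} of extended pseudo-metrics, and let D be the wedge ep-metric: D(x,y) = inf over all finite chains x = x₀, …, x_n = y and indices i₁, …, i_n ∈ I of Σ_{j=1}^{n} d_{i_j}(x_{j-1}, x_j). Then for every s ∈ [0,∞], the equivalence relation on X generated by the relation {(x,y) : d_i(x,y) ≤ s for some i ∈ I} coincides with the equivalence relation on X generated by the relation {(x,y) : D(x,y) ≤ s}. (Equivalently, the canonical map ∨_i V(X,d_i) → V(X,D) induces a bijection on path components π₀ in each section s.) -/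
open scoped ENNReal

/-- `d` is an extended pseudo-metric on `X`: it takes values in `[0,∞]`,
vanishes on the diagonal, is symmetric, and satisfies the triangle inequality. -/
structure IsEPMetric {X : Type*} (d : X → X → ℝ≥0∞) : Prop where
  refl : ∀ x, d x x = 0
  symm : ∀ x y, d x y = d y x
  triangle : ∀ x y z, d x z ≤ d x y + d y z

/-- The set of costs `Σ_{j=1}^{n} d_{i_j}(x_{j-1}, x_j)` of finite chains
`x = x₀, x₁, …, x_n = y` together with choices of indices `i₁, …, i_n`. -/
def chainCosts {X I : Type*} (d : I → X → X → ℝ≥0∞) (x y : X) : Set ℝ≥0∞ :=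
  { c | ∃ (n : ℕ) (p : Fin (n + 1) → X) (ix : Fin n → I),
      p 0 = x ∧ p (Fin.last n) = y ∧
      c = ∑ j : Fin n, d (ix j) (p j.castSucc) (p j.succ) }

/-- The wedge ep-metric `D` of a family of ep-metrics: the infimum of the
costs of all finite chains from `x` to `y`. -/
noncomputable def wedgeDist {X I : Type*} (d : I → X → X → ℝ≥0∞) (x y : X) : ℝ≥0∞ :=
  sInf (chainCosts d x y)

/-- A single step `d i x y` is a chain cost. -/
lemma single_step_mem_chainCosts {X I : Type*} (d : I → X → X → ℝ≥0∞)
    (i : I) (x y : X) : d i x y ∈ chainCosts d x y := by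
  refine ⟨1, ![x, y], fun _ => i, rfl, rfl, ?_⟩
  simp

/-- Key lemma for the reverse direction. -/
lemma wedge_le_imp_eqvGen {X I : Type*} [Finite X] [Finite I] [Nonempty I]
    (d : I → X → X → ℝ≥0∞) (s : ℝ≥0∞) (x y : X) (hxy : wedgeDist d x y ≤ s) :
    Relation.EqvGen (fun x y => ∃ i : I, d i x y ≤ s) x y := by
  by_cases hs : s = ∞
  · exact Relation.EqvGen.rel _ _ ⟨Classical.arbitrary I, hs ▸ le_top⟩
  by_contra hR
  set R := Relation.EqvGen (fun x y => ∃ i : I, d i x y ≤ s) with hRdef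
  set T : Set ℝ≥0∞ := {c | ∃ i a b, s < d i a b ∧ c = d i a b} with hT
  have hTfin : T.Finite := by
    have hsub : T ⊆ Set.range (fun q : I × X × X => d q.1 q.2.1 q.2.2) := by
      rintro c ⟨i, a, b, _, rfl⟩
      exact ⟨(i, a, b), rfl⟩
    exact (Set.finite_range _).subset hsub
  have hδ : s < sInf T := by
    rcases T.eq_empty_or_nonempty with h | h
    · rw [h, sInf_empty]
      exact lt_top_iff_ne_top.2 hs
    · obtain ⟨i, a, b, hlt, he⟩ := h.csInf_mem hTfin
      rw [he]
      exact hlt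
  have hle : sInf T ≤ wedgeDist d x y := by
    apply le_sInf
    rintro c ⟨n, p, ix, hp0, hpn, rfl⟩
    have hstep : ∃ j : Fin n, ¬ R (p j.castSucc) (p j.succ) := by
      by_contra hall
      push_neg at hall
      apply hR
      have hkey : ∀ k : Fin (n + 1), R (p 0) (p k) := by
        intro k
        induction k using Fin.induction with
        | zero => exact Relation.EqvGen.refl _
        | succ j ih => exact Relation.EqvGen.trans _ _ _ ih (hall j)
      rw [hRdef, ← hp0, ← hpn]
      exact hkey _
    obtain ⟨j, hj⟩ := hstep
    have hall : ∀ i, s < d i (p j.castSucc) (p j.succ) := by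
      intro i
      by_contra h
      push_neg at h
      exact hj (Relation.EqvGen.rel _ _ ⟨i, h⟩)
    calc sInf T ≤ d (ix j) (p j.castSucc) (p j.succ) :=
          sInf_le ⟨ix j, _, _, hall _, rfl⟩
      _ ≤ ∑ j : Fin n, d (ix j) (p j.castSucc) (p j.succ) :=
          Finset.single_le_sum (f := fun j : Fin n => d (ix j) (p j.castSucc) (p j.succ)) (fun _ _ => zero_le) (Finset.mem_univ j)
  exact absurd (hle.trans hxy) (not_le.2 hδ)

/-- Excision (Lemma 2): for a finite set `X` with a finite (nonempty) family of
ep-metrics `d_i` and wedge ep-metric `D`, for every `s ∈ [0,∞]` the equivalence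
relation generated by `{(x,y) : d_i(x,y) ≤ s for some i}` coincides with the
equivalence relation generated by `{(x,y) : D(x,y) ≤ s}`.  (Equivalently, the
canonical map `∨_i V(X,d_i) → V(X,D)` induces a bijection on path components
`π₀` in each section `s`.) -/
theorem excision {X I : Type*} [Finite X] [Finite I] [Nonempty I]
    (d : I → X → X → ℝ≥0∞) (hd : ∀ i, IsEPMetric (d i)) (s : ℝ≥0∞) :
    Relation.EqvGen (fun x y => ∃ i : I, d i x y ≤ s) =
      Relation.EqvGen (fun x y => wedgeDist d x y ≤ s) := by
  funext x y
  apply propext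
  constructor
  · refine Relation.EqvGen.mono (fun a b hab => ?_) x y
    obtain ⟨i, hi⟩ := hab
    exact le_trans (sInf_le (single_step_mem_chainCosts d i a b)) hi
  · intro h
    induction h with
    | rel a b hab => exact wedge_le_imp_eqvGen d s a b hab
    | refl a => exact Relation.EqvGen.refl a
    | symm a b _ ih => exact Relation.EqvGen.symm a b ih
    | trans a b c _ _ ih1 ih2 => exact Relation.EqvGen.trans a b c ih1 ih2
end

section
/- Let X be a set, x ∈ X, N_x ⊆ X \ {x} a set of neighbours, and w : N_x → [0,∞] a weight function. For each y ∈ N_x define the two-point ep-metric d^y on X by d^y(u,u) = 0, d^y(x,y) = d^y(y,x) = w(y), and d^y(u,v) = ∞ for all other pairs u ≠ v. Let D_x be the wedge ep-metric of the family (d^y)_{y ∈ N_x}: D_x(u,v) = inf over finite chains u = u₀, …, u_n = v and choices y₁, …, y_n ∈ N_x of Σ_j d^{y_j}(u_{j-1},u_j). Then: D_x(x,y) = w(y) for every y ∈ N_x; D_x(y,z) = w(y) + w(z) for all distinct y, z ∈ N_x; and D_x(u,v) = ∞ whenever u ≠ v and {u,v} is not contained in {x} ∪ N_x. -/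
open scoped ENNReal

open Classical in
/-- The two-point ep-metric `d^y` on `X` determined by a base point `x`, a
neighbour `y` and a weight `w y`: `d^y(x,y) = d^y(y,x) = w y`, the diagonal is
`0`, and all other distances are `∞`. -/
noncomputable def twoPointDist {X : Type*} (x : X) (w : X → ℝ≥0∞) (y : X) :
    X → X → ℝ≥0∞ := fun u v =>
  if u = v then 0
  else if (u = x ∧ v = y) ∨ (u = y ∧ v = x) then w y
  else ⊤


open Classical in
noncomputable def Dlow {X : Type*} (x : X) (N : Set X) (w : X → ℝ≥0∞) :
    X → X → ℝ≥0∞ := fun u v =>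
  if u = v then 0
  else if u = x ∧ v ∈ N then w v
  else if v = x ∧ u ∈ N then w u
  else if u ∈ N ∧ v ∈ N then w u + w v
  else ⊤

theorem Dlow_step {X : Type*} (x : X) (N : Set X) (hxN : x ∉ N) (w : X → ℝ≥0∞)
    (i : N) (a b c : X) :
    Dlow x N w a c ≤ Dlow x N w a b + twoPointDist x w i b c := by
  classical
  unfold Dlow twoPointDist
  obtain ⟨i, hi⟩ := i
  by_cases hbc : b = c
  · subst hbc; simp
  by_cases h1 : (b = x ∧ c = i) ∨ (b = i ∧ c = x)
  · rcases h1 with ⟨hb, hc⟩ | ⟨hb, hc⟩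
    · subst hb; subst hc
      split_ifs <;> simp_all [add_comm, add_assoc, add_left_comm]
    · subst hb; subst hc
      split_ifs <;> simp_all [add_comm, add_assoc, add_left_comm]
  · simp only [if_neg hbc, if_neg h1]
    simp

theorem Dlow_chain {X : Type*} (x : X) (N : Set X) (hxN : x ∉ N) (w : X → ℝ≥0∞)
    (n : ℕ) (p : Fin (n + 1) → X) (ix : Fin n → N) :
    Dlow x N w (p 0) (p (Fin.last n)) ≤
      ∑ j : Fin n, twoPointDist x w (ix j) (p j.castSucc) (p j.succ) := by
  induction n with
  | zero => simp [Dlow]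
  | succ n IH =>
    rw [Fin.sum_univ_castSucc]
    calc Dlow x N w (p 0) (p (Fin.last (n+1)))
        ≤ Dlow x N w (p 0) (p ((Fin.last n).castSucc)) +
            twoPointDist x w (ix (Fin.last n)) (p ((Fin.last n).castSucc))
              (p (Fin.last (n+1))) := by
          have := Dlow_step x N hxN w (ix (Fin.last n)) (p 0)
            (p ((Fin.last n).castSucc)) (p (Fin.last (n+1)))
          exact this
      _ ≤ _ := by
          apply add_le_add _ (le_of_eq ?_)
          · have := IH (fun j => p j.castSucc) (fun j => ix j.castSucc)
            simpa only [Fin.succ_castSucc, Fin.castSucc_zero] using this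
          · rw [Fin.succ_last]

theorem Dlow_le_wedge {X : Type*} (x : X) (N : Set X) (hxN : x ∉ N)
    (w : X → ℝ≥0∞) (u v : X) :
    Dlow x N w u v ≤ wedgeDist (fun y : N => twoPointDist x w y) u v := by
  apply le_sInf
  rintro c ⟨n, p, ix, h0, hl, rfl⟩
  have := Dlow_chain x N hxN w n p ix
  rwa [h0, hl] at this

/-- The ep-metric `D_x` on `X` obtained as the wedge of the two-point
ep-metrics `d^y`, `y ∈ N_x`:  `D_x(x,y) = w y` for `y ∈ N_x`,
`D_x(y,z) = w y + w z` for distinct `y, z ∈ N_x`, and `D_x(u,v) = ∞` whenever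
`u ≠ v` and `{u,v}` is not contained in `{x} ∪ N_x`. -/
theorem wedge_twoPointDist {X : Type*} (x : X) (N : Set X) (hxN : x ∉ N)
    (w : X → ℝ≥0∞) :
    (∀ y ∈ N, wedgeDist (fun y : N => twoPointDist x w y) x y = w y) ∧
    (∀ y ∈ N, ∀ z ∈ N, y ≠ z →
      wedgeDist (fun y : N => twoPointDist x w y) y z = w y + w z) ∧
    (∀ u v : X, u ≠ v → ¬(u ∈ insert x N ∧ v ∈ insert x N) →
      wedgeDist (fun y : N => twoPointDist x w y) u v = ⊤) := by
  classical
  refine ⟨?_, ?_, ?_⟩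
  · intro y hy
    have hxy : x ≠ y := fun h => hxN (h ▸ hy)
    apply le_antisymm
    · apply sInf_le
      refine ⟨1, ![x, y], ![⟨y, hy⟩], rfl, rfl, ?_⟩
      simp [twoPointDist, hxy]
    · have := Dlow_le_wedge x N hxN w x y
      refine le_trans (le_of_eq ?_) this
      simp [Dlow, hxy, hy]
  · intro y hy z hz hyz
    have hyx : y ≠ x := fun h => hxN (h ▸ hy)
    have hzx : z ≠ x := fun h => hxN (h ▸ hz)
    apply le_antisymm
    · apply sInf_le
      refine ⟨2, ![y, x, z], ![⟨y, hy⟩, ⟨z, hz⟩], rfl, rfl, ?_⟩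
      simp [Fin.sum_univ_two, twoPointDist, hyx, hzx.symm]
    · have := Dlow_le_wedge x N hxN w y z
      refine le_trans (le_of_eq ?_) this
      simp [Dlow, hyz, hyx, hy, hz, hzx]
  · intro u v huv hm
    apply le_antisymm le_top
    have := Dlow_le_wedge x N hxN w u v
    refine le_trans (le_of_eq ?_) this
    simp only [Set.mem_insert_iff, not_and_or, not_or] at hm
    unfold Dlow
    rcases hm with ⟨hu1, hu2⟩ | ⟨hv1, hv2⟩ <;>
      simp_all
end

section
/- (Proposition 8, lower-triangle homotopy.) Let (X,d_X) and (Y,d_Y) be metric spaces and i : X → Y an injection with d_Y(i(x), i(x')) ≤ d_X(x,x') for all x, x' ∈ X. Let m ≥ 1 satisfy d_X(x,x') ≤ m · d_Y(i(x), i(x')) for all x, x' ∈ X, let r > 0, and let θ : Y → X satisfy θ(i(x)) = x for all x ∈ X and d_Y(y, i(θ(y))) < r for all y ∈ Y. Then for every s ∈ [0,∞) and every subset σ ⊆ Y with d_Y(u,v) ≤ s for all u, v ∈ σ, the set σ ∪ i(θ(σ)) ⊆ Y satisfies d_Y(u,v) ≤ m·(s + 2r) for all u, v ∈ σ ∪ i(θ(σ)).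 (The inclusions σ ⊆ σ ∪ i(θ(σ)) ⊇ i(θ(σ)) in P_{m(s+2r)}(Y,d_Y) give the homotopy, rel P_s(X,d_X), between i∘θ and the canonical map P_s(Y,d_Y) → P_{m(s+2r)}(Y,d_Y).) -/
/-- Proposition 8, lower-triangle homotopy: under the hypotheses of
Proposition 8, for every `s ∈ [0,∞)` and every subset `σ ⊆ Y` with pairwise
distances `≤ s`, the set `σ ∪ i(θ(σ)) ⊆ Y` has pairwise distances
`≤ m·(s + 2r)`.  (The inclusions `σ ⊆ σ ∪ i(θ(σ)) ⊇ i(θ(σ))` in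
`P_{m(s+2r)}(Y,d_Y)` give the homotopy, rel `P_s(X,d_X)`, between `i ∘ θ` and
the canonical map `P_s(Y,d_Y) → P_{m(s+2r)}(Y,d_Y)`.) -/
theorem rips_lower_triangle_homotopy {X Y : Type*} [MetricSpace X] [MetricSpace Y]
    (i : X → Y) (hi : Function.Injective i)
    (hcomp : ∀ x x' : X, dist (i x) (i x') ≤ dist x x')
    (m : ℝ) (hm1 : 1 ≤ m)
    (hm : ∀ x x' : X, dist x x' ≤ m * dist (i x) (i x'))
    (r : ℝ) (hr : 0 < r)
    (θ : Y → X) (hθi : ∀ x : X, θ (i x) = x)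
    (hθr : ∀ y : Y, dist y (i (θ y)) < r) :
    ∀ s : ℝ, 0 ≤ s → ∀ σ : Set Y, (∀ u ∈ σ, ∀ v ∈ σ, dist u v ≤ s) →
      ∀ u ∈ σ ∪ i '' (θ '' σ), ∀ v ∈ σ ∪ i '' (θ '' σ),
        dist u v ≤ m * (s + 2 * r) := by
  intro s hs σ hσ u hu v hv
  have hle : s + 2 * r ≤ m * (s + 2 * r) :=
    le_mul_of_one_le_left (by linarith) hm1
  have key : ∀ w, w ∈ σ ∪ i '' (θ '' σ) → ∃ w' ∈ σ, dist w w' ≤ r := by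
    rintro w (hw | ⟨x, ⟨w', hw', rfl⟩, rfl⟩)
    · exact ⟨w, hw, by rw [dist_self]; exact hr.le⟩
    · exact ⟨w', hw', by rw [dist_comm]; exact (hθr w').le⟩
  obtain ⟨u', hu', hud⟩ := key u hu
  obtain ⟨v', hv', hvd⟩ := key v hv
  have := hσ u' hu' v' hv'
  calc dist u v ≤ dist u u' + dist u' v' + dist v' v := dist_triangle4 u u' v' v
    _ ≤ r + s + r := by rw [dist_comm v' v]; linarith
    _ ≤ m * (s + 2 * r) := by linarith
end

section
/- (Theorem 9, componentwise stability.) Let X ⊆ Y be finite sets with compatible neighbourhood systems: N_x ⊆ X \ {x} with weights d_x(x,z) ∈ (0,∞), N'_y ⊆ Y \ {y} with weights d'_y(y,z) ∈ (0,∞), N_x ⊆ N'_x and d'_x(x,z) ≤ d_x(x,z) for all x ∈ X, z ∈ N_x. Let D and D' be the UMAP ep-metrics on X and Y. Let E be a global connected component of (X,D) and F a global connected component of (Y,D') with E ⊆ F. Let m ≥ 1 be a real number with D(u,v) ≤ m · D'(u,v) for all u, v ∈ E, and let r > 0 be such that for every y ∈ F there is an x ∈ E with D'(y,x) < r. Then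 there exists θ : F → E with θ(x) = x for all x ∈ E such that for every s ∈ [0,∞): (i) every σ ⊆ E with pairwise D-distances ≤ s has pairwise D'-distances ≤ s; (ii) every σ ⊆ F with pairwise D'-distances ≤ s has θ(σ) with pairwise D-distances ≤ m·(s+2r); (iii) for every σ ⊆ F with pairwise D'-distances ≤ s, the set σ ∪ θ(σ) has pairwise D'-distances ≤ m·(s+2r); and (iv) θ(σ) = σ for every σ ⊆ E. Hence the interleaving diagram of Rips posets P_s(E,D) → P_s(F,D') → P_{m(s+2r)}(E,D) → P_{m(s+2r)}(F,D') commutes (the upper triangle strictly, the lower triangle up to the homotopy given by the inclusions σ ⊆ σ ∪ θ(σ) ⊇ θ(σ), rel P_s(E,D)). -/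
open scoped ENNReal NNReal

open Classical in
/-- The ep-metric `D_z` on `X` determined by a centre `z`, its set of
neighbours `N z` and weights `w z -`:  `D_z(u,u) = 0`;
`D_z(z,y) = D_z(y,z) = w z y` for `y ∈ N z`;
`D_z(y,y') = w z y + w z y'` for distinct `y, y' ∈ N z`; and
`D_z(u,v) = ∞` for all other pairs `u ≠ v`. -/
noncomputable def starDist {X : Type*} (N : X → Set X) (w : X → X → ℝ≥0∞)
    (z : X) : X → X → ℝ≥0∞ := fun u v =>
  if u = v then 0
  else if u = z ∧ v ∈ N z then w z v
  else if v = z ∧ u ∈ N z then w z u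
  else if u ∈ N z ∧ v ∈ N z then w z u + w z v
  else ⊤

/-- The UMAP ep-metric `D = ∨_{z ∈ X} D_z`, the wedge of the ep-metrics
`D_z` over all centres `z ∈ X`. -/
noncomputable def umapDist {X : Type*} (N : X → Set X) (w : X → X → ℝ≥0∞) :
    X → X → ℝ≥0∞ :=
  wedgeDist (fun z : X => starDist N w z)

/-- `E` is a global connected component of the ep-metric space `(Z,d)`:
it is an equivalence class of the relation `d(u,v) < ∞`. -/
def IsGlobalComponent {Z : Type*} (d : Z → Z → ℝ≥0∞) (E : Set Z) : Prop :=
  ∃ u : Z, E = {v | d u v < ⊤}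

/-! ### Auxiliary lemmas -/

section Aux
variable {X I : Type*} {d : I → X → X → ℝ≥0∞}

lemma zero_mem_chainCosts (d : I → X → X → ℝ≥0∞) (x : X) : 0 ∈ chainCosts d x x :=
  ⟨0, fun _ => x, Fin.elim0, rfl, rfl, by simp⟩

lemma wedgeDist_self (d : I → X → X → ℝ≥0∞) (x : X) : wedgeDist d x x = 0 :=
  le_antisymm (sInf_le (zero_mem_chainCosts d x)) (zero_le)

lemma chainCosts_symm_subset (hd : ∀ i a b, d i a b = d i b a) (x y : X) :
    chainCosts d x y ⊆ chainCosts d y x := by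
  rintro c ⟨n, p, ix, h0, hl, rfl⟩
  refine ⟨n, p ∘ Fin.rev, ix ∘ Fin.rev, by simp [Fin.rev_zero, hl],
    by simp [Fin.rev_last, h0], ?_⟩
  calc ∑ j : Fin n, d (ix j) (p j.castSucc) (p j.succ)
      = ∑ j : Fin n, d (ix j.rev) (p j.rev.castSucc) (p j.rev.succ) :=
        (Equiv.sum_comp Fin.revPerm fun j => d (ix j) (p j.castSucc) (p j.succ)).symm
    _ = ∑ j : Fin n, d ((ix ∘ Fin.rev) j) ((p ∘ Fin.rev) j.castSucc) ((p ∘ Fin.rev) j.succ) := by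
        refine Finset.sum_congr rfl fun j _ => ?_
        simp only [Function.comp_apply, Fin.rev_castSucc, Fin.rev_succ]
        exact hd _ _ _

lemma wedgeDist_comm (hd : ∀ i a b, d i a b = d i b a) (x y : X) :
    wedgeDist d x y = wedgeDist d y x :=
  le_antisymm (sInf_le_sInf (chainCosts_symm_subset hd y x))
    (sInf_le_sInf (chainCosts_symm_subset hd x y))

lemma add_mem_chainCosts {x y z : X} {a b : ℝ≥0∞}
    (ha : a ∈ chainCosts d x y) (hb : b ∈ chainCosts d y z) :
    a + b ∈ chainCosts d x z := by
  obtain ⟨n, p, ix, hp0, hpl, rfl⟩ := ha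
  obtain ⟨k, q, jx, hq0, hql, rfl⟩ := hb
  refine ⟨n + k,
    fun t => if h : t.val ≤ n then p ⟨t.val, by omega⟩ else q ⟨t.val - n, by omega⟩,
    fun t => if h : t.val < n then ix ⟨t.val, h⟩ else jx ⟨t.val - n, by omega⟩,
    ?_, ?_, ?_⟩
  · simp only [Fin.val_zero, Nat.zero_le, dif_pos]
    exact hp0
  · by_cases hk : k = 0
    · subst hk
      have hle : ((Fin.last (n + 0)).val ≤ n) := by simp
      beta_reduce
      rw [dif_pos hle]
      have e : (⟨(Fin.last (n+0)).val, by omega⟩ : Fin (n+1)) = Fin.last n := by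
        ext; simp
      rw [e, hpl, ← hql]
      rw [show (Fin.last 0) = 0 from rfl, hq0]
    · have h1 : ¬ ((Fin.last (n + k)).val ≤ n) := by simp [Fin.last]; omega
      beta_reduce
      rw [dif_neg h1]
      have e : (⟨(Fin.last (n+k)).val - n, by omega⟩ : Fin (k+1)) = Fin.last k := by
        ext; simp [Fin.last]
      rw [e, hql]
  · rw [Fin.sum_univ_add]
    congr 1
    · refine Finset.sum_congr rfl fun i _ => ?_
      have h1 : ((Fin.castAdd k i).val < n) := i.isLt
      have h2 : (((Fin.castAdd k i).castSucc).val ≤ n) := by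
        have := i.isLt; simp only [Fin.coe_castSucc, Fin.coe_castAdd]; omega
      have h3 : (((Fin.castAdd k i).succ).val ≤ n) := by
        have := i.isLt; simp only [Fin.val_succ, Fin.coe_castAdd]; omega
      beta_reduce
      rw [dif_pos h1, dif_pos h2, dif_pos h3]
      rfl
    · refine Finset.sum_congr rfl fun j _ => ?_
      have h1 : ¬ ((Fin.natAdd n j).val < n) := by simp
      have h3 : ¬ (((Fin.natAdd n j).succ).val ≤ n) := by simp
      beta_reduce
      rw [dif_neg h1, dif_neg h3]
      have e0 : (⟨(Fin.natAdd n j).val - n, by omega⟩ : Fin k) = j := by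
        ext; simp
      have e2 : (⟨((Fin.natAdd n j).succ).val - n, by omega⟩ : Fin (k+1)) = j.succ := by
        ext; simp; omega
      rw [e0, e2]
      by_cases hj : (((Fin.natAdd n j).castSucc).val ≤ n)
      · have hj0 : j.val = 0 := by simpa using hj
        rw [dif_pos hj]
        have e1 : (⟨((Fin.natAdd n j).castSucc).val, by omega⟩ : Fin (n+1)) = Fin.last n := by
          ext; simp; omega
        rw [e1, hpl, show j.castSucc = (0 : Fin (k+1)) from by ext; simpa using hj0, hq0]
      · rw [dif_neg hj]
        have e1 : (⟨((Fin.natAdd n j).castSucc).val - n, by omega⟩ : Fin (k+1)) = j.castSucc := by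
          ext; simp
        rw [e1]

lemma wedgeDist_triangle (d : I → X → X → ℝ≥0∞) (x y z : X) :
    wedgeDist d x z ≤ wedgeDist d x y + wedgeDist d y z := by
  unfold wedgeDist
  rw [ENNReal.sInf_add]
  refine le_iInf₂ fun a ha => ?_
  rw [add_comm, ENNReal.sInf_add]
  refine le_iInf₂ fun b hb => ?_
  rw [add_comm]
  exact sInf_le (add_mem_chainCosts ha hb)

end Aux

section Star
variable {X Y : Type*}

lemma starDist_comm (N : X → Set X) (w : X → X → ℝ≥0∞) (z u v : X) :
    starDist N w z u v = starDist N w z v u := by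
  unfold starDist
  rcases eq_or_ne u v with rfl | h
  · simp
  rw [if_neg h, if_neg (Ne.symm h)]
  split_ifs <;> first | rfl | tauto | simp_all [add_comm]

lemma starDist_map_le (i : X → Y) (hi : Function.Injective i)
    (NX : X → Set X) (wX : X → X → ℝ≥0∞) (hNX : ∀ x, x ∉ NX x)
    (NY : Y → Set Y) (wY : Y → Y → ℝ≥0∞)
    (hsub : ∀ x z, z ∈ NX x → i z ∈ NY (i x))
    (hcomp : ∀ x z, z ∈ NX x → wY (i x) (i z) ≤ wX x z)
    (z a b : X) :
    starDist NY wY (i z) (i a) (i b) ≤ starDist NX wX z a b := by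
  unfold starDist
  rcases eq_or_ne a b with rfl | hab
  · simp
  rw [if_neg hab, if_neg (fun h => hab (hi h))]
  by_cases h2 : a = z ∧ b ∈ NX z
  · rw [if_pos h2, if_pos ⟨congrArg i h2.1, hsub z b h2.2⟩]
    exact hcomp z b h2.2
  rw [if_neg h2]
  by_cases h3 : b = z ∧ a ∈ NX z
  · have haz : a ≠ z := fun h => hab (h.trans h3.1.symm)
    rw [if_pos h3, if_neg (fun h => haz (hi h.1)),
      if_pos ⟨congrArg i h3.1, hsub z a h3.2⟩]
    exact hcomp z a h3.2
  rw [if_neg h3]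
  by_cases h4 : a ∈ NX z ∧ b ∈ NX z
  · have haz : a ≠ z := fun h => hNX z (h ▸ h4.1)
    have hbz : b ≠ z := fun h => hNX z (h ▸ h4.2)
    rw [if_pos h4, if_neg (fun h => haz (hi h.1)), if_neg (fun h => hbz (hi h.1)),
      if_pos ⟨hsub z a h4.1, hsub z b h4.2⟩]
    exact add_le_add (hcomp z a h4.1) (hcomp z b h4.2)
  · rw [if_neg h4]; exact le_top

open Classical in
/-- The retraction `θ : Y → X`: points in the image of `E` go to their
(unique) preimage, other points go to a nearby point of `E` (if one exists),
and everything else goes to a default point. -/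
noncomputable def umapRetract (i : X → Y) (E : Set X)
    (D' : Y → Y → ℝ≥0∞) (r : ℝ≥0∞) (x₀ : X) : Y → X := fun y =>
  if h : ∃ x, x ∈ E ∧ i x = y then h.choose
  else if h2 : ∃ x, x ∈ E ∧ D' y (i x) < r then h2.choose
  else x₀

lemma umapRetract_image (i : X → Y) (hi : Function.Injective i) (E : Set X)
    (D' : Y → Y → ℝ≥0∞) (r : ℝ≥0∞) (x₀ : X) {x : X} (hx : x ∈ E) :
    umapRetract i E D' r x₀ (i x) = x := by
  unfold umapRetract
  have h : ∃ x' , x' ∈ E ∧ i x' = i x := ⟨x, hx, rfl⟩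
  rw [dif_pos h]
  exact hi h.choose_spec.2

lemma umapRetract_spec (i : X → Y) (E : Set X)
    (D' : Y → Y → ℝ≥0∞) (hrefl : ∀ y, D' y y = 0) (r : ℝ≥0∞) (hr : 0 < r) (x₀ : X)
    {y : Y} (hy : ∃ x, x ∈ E ∧ D' y (i x) < r) :
    umapRetract i E D' r x₀ y ∈ E ∧ D' y (i (umapRetract i E D' r x₀ y)) < r := by
  unfold umapRetract
  by_cases h : ∃ x, x ∈ E ∧ i x = y
  · rw [dif_pos h]
    exact ⟨h.choose_spec.1, by rw [h.choose_spec.2, hrefl]; exact hr⟩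
  · rw [dif_neg h, dif_pos hy]
    exact hy.choose_spec

end Star

/-- Theorem 9, componentwise stability: given an inclusion `i : X ⊆ Y` of
finite sets with compatible neighbourhood systems, UMAP ep-metrics `D`, `D'`,
global connected components `E ⊆ X` and `F ⊆ Y` with `i(E) ⊆ F`, a
compression factor `m ≥ 1` with `D(u,v) ≤ m·D'(i u, i v)` on `E`, and `r > 0`
such that every point of `F` is within `D'`-distance `< r` of a point of
`i(E)`, there is a retraction `θ : F → E` giving a homotopy interleaving of
Rips posets: (i) `P_s(E,D) → P_s(F,D')` is induced by `i`; (ii) `θ` induces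
`P_s(F,D') → P_{m(s+2r)}(E,D)`; (iii) the inclusions
`σ ⊆ σ ∪ i(θ(σ)) ⊇ i(θ(σ))` live in `P_{m(s+2r)}(F,D')` (lower-triangle
homotopy); and (iv) `θ(σ) = σ` for `σ ⊆ E` (upper triangle). -/
theorem umap_componentwise_stability {X Y : Type*} [Finite X] [Finite Y]
    (i : X → Y) (hi : Function.Injective i)
    (NX : X → Set X) (wX : X → X → ℝ≥0∞) (hNX : ∀ x, x ∉ NX x)
    (hwX : ∀ x z, z ∈ NX x → 0 < wX x z ∧ wX x z < ⊤)
    (NY : Y → Set Y) (wY : Y → Y → ℝ≥0∞) (hNY : ∀ y, y ∉ NY y)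
    (hwY : ∀ y z, z ∈ NY y → 0 < wY y z ∧ wY y z < ⊤)
    (hsub : ∀ x z, z ∈ NX x → i z ∈ NY (i x))
    (hcomp : ∀ x z, z ∈ NX x → wY (i x) (i z) ≤ wX x z)
    (E : Set X) (hE : IsGlobalComponent (umapDist NX wX) E)
    (F : Set Y) (hF : IsGlobalComponent (umapDist NY wY) F)
    (hEF : i '' E ⊆ F)
    (m : ℝ≥0) (hm1 : 1 ≤ m)
    (hm : ∀ u ∈ E, ∀ v ∈ E,
      umapDist NX wX u v ≤ (m : ℝ≥0∞) * umapDist NY wY (i u) (i v))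
    (r : ℝ≥0) (hr : 0 < r)
    (hnear : ∀ y ∈ F, ∃ x ∈ E, umapDist NY wY y (i x) < (r : ℝ≥0∞)) :
    ∃ θ : Y → X, (∀ y ∈ F, θ y ∈ E) ∧ (∀ x ∈ E, θ (i x) = x) ∧
      ∀ s : ℝ≥0,
        -- (i) `i` induces `P_s(E,D) → P_s(F,D')`
        (∀ σ : Set X, σ ⊆ E →
          (∀ u ∈ σ, ∀ v ∈ σ, umapDist NX wX u v ≤ (s : ℝ≥0∞)) →
          ∀ u ∈ i '' σ, ∀ v ∈ i '' σ, umapDist NY wY u v ≤ (s : ℝ≥0∞)) ∧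
        -- (ii) `θ` induces `P_s(F,D') → P_{m(s+2r)}(E,D)`
        (∀ σ : Set Y, σ ⊆ F →
          (∀ u ∈ σ, ∀ v ∈ σ, umapDist NY wY u v ≤ (s : ℝ≥0∞)) →
          ∀ u ∈ θ '' σ, ∀ v ∈ θ '' σ,
            umapDist NX wX u v ≤ (m : ℝ≥0∞) * ((s : ℝ≥0∞) + 2 * (r : ℝ≥0∞))) ∧
        -- (iii) lower-triangle homotopy: `σ ∪ i(θ(σ)) ∈ P_{m(s+2r)}(F,D')`
        (∀ σ : Set Y, σ ⊆ F →
          (∀ u ∈ σ, ∀ v ∈ σ, umapDist NY wY u v ≤ (s : ℝ≥0∞)) →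
          ∀ u ∈ σ ∪ i '' (θ '' σ), ∀ v ∈ σ ∪ i '' (θ '' σ),
            umapDist NY wY u v ≤ (m : ℝ≥0∞) * ((s : ℝ≥0∞) + 2 * (r : ℝ≥0∞))) ∧
        -- (iv) upper triangle: `θ(i(σ)) = σ` for `σ ⊆ E`
        (∀ σ : Set X, σ ⊆ E → θ '' (i '' σ) = σ) := by
  classical
  set D := umapDist NX wX with hD
  set D' := umapDist NY wY with hD'
  have hD'comm : ∀ u v : Y, D' u v = D' v u :=
    fun u v => wedgeDist_comm (fun z a b => starDist_comm NY wY z a b) u v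
  have hD'tri : ∀ u v w : Y, D' u w ≤ D' u v + D' v w :=
    fun u v w => wedgeDist_triangle _ u v w
  have hD'refl : ∀ y : Y, D' y y = 0 := fun y => wedgeDist_self _ y
  have hmono : ∀ u v : X, D' (i u) (i v) ≤ D u v := by
    intro u v
    refine le_sInf ?_
    rintro c ⟨n, p, ix, h0, hl, rfl⟩
    refine le_trans (sInf_le ⟨n, i ∘ p, i ∘ ix, by simp [h0], by simp [hl], rfl⟩) ?_
    exact Finset.sum_le_sum fun j _ =>
      starDist_map_le i hi NX wX hNX NY wY hsub hcomp _ _ _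
  have hrpos : (0 : ℝ≥0∞) < (r : ℝ≥0∞) := by exact_mod_cast hr
  have hm' : (1 : ℝ≥0∞) ≤ (m : ℝ≥0∞) := by exact_mod_cast hm1
  set θ : Y → X := umapRetract i E D' (r : ℝ≥0∞) hE.choose with hθdef
  have hθE : ∀ y ∈ F, θ y ∈ E ∧ D' y (i (θ y)) < (r : ℝ≥0∞) := by
    intro y hy
    exact umapRetract_spec i E D' hD'refl (r : ℝ≥0∞) hrpos hE.choose
      (by obtain ⟨x, hx, hlt⟩ := hnear y hy; exact ⟨x, hx, hlt⟩)
  have hθi : ∀ x ∈ E, θ (i x) = x := fun x hx =>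
    umapRetract_image i hi E D' (r : ℝ≥0∞) hE.choose hx
  refine ⟨θ, fun y hy => (hθE y hy).1, hθi, fun s => ⟨?_, ?_, ?_, ?_⟩⟩
  · -- (i)
    rintro σ hσ hpair _ ⟨a, ha, rfl⟩ _ ⟨b, hb, rfl⟩
    exact le_trans (hmono a b) (hpair a ha b hb)
  · -- (ii)
    rintro σ hσ hpair _ ⟨a, ha, rfl⟩ _ ⟨b, hb, rfl⟩
    obtain ⟨haE, hra⟩ := hθE a (hσ ha)
    obtain ⟨hbE, hrb⟩ := hθE b (hσ hb)
    refine le_trans (hm _ haE _ hbE) (mul_le_mul_right ?_ _)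
    calc D' (i (θ a)) (i (θ b))
        ≤ D' (i (θ a)) a + (D' a b + D' b (i (θ b))) :=
          le_trans (hD'tri _ a _) (add_le_add_right (hD'tri a b _) _)
      _ ≤ (r : ℝ≥0∞) + ((s : ℝ≥0∞) + (r : ℝ≥0∞)) := by
          refine add_le_add ?_ (add_le_add (hpair a ha b hb) hrb.le)
          rw [hD'comm]; exact hra.le
      _ = (s : ℝ≥0∞) + 2 * (r : ℝ≥0∞) := by ring
  · -- (iii)
    rintro σ hσ hpair u hu v hv
    have key : D' u v ≤ (s : ℝ≥0∞) + 2 * (r : ℝ≥0∞) := by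
      have haux : ∀ a ∈ σ, ∀ b ∈ σ, D' a (i (θ b)) ≤ (s : ℝ≥0∞) + (r : ℝ≥0∞) := by
        intro a ha b hb
        exact le_trans (hD'tri a b _) (add_le_add (hpair a ha b hb) (hθE b (hσ hb)).2.le)
      simp only [Set.mem_union, Set.mem_image] at hu hv
      rcases hu with hu | ⟨_, ⟨a, ha, rfl⟩, rfl⟩ <;>
        rcases hv with hv | ⟨_, ⟨b, hb, rfl⟩, rfl⟩
      · calc D' u v ≤ (s : ℝ≥0∞) := hpair u hu v hv
          _ ≤ _ := le_self_add
      · calc D' u (i (θ b)) ≤ (s : ℝ≥0∞) + (r : ℝ≥0∞) := haux u hu b hb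
          _ ≤ (s : ℝ≥0∞) + 2 * (r : ℝ≥0∞) := by
              gcongr
              calc (r : ℝ≥0∞) = 1 * r := (one_mul _).symm
                _ ≤ 2 * r := by gcongr <;> norm_num
      · calc D' (i (θ a)) v = D' v (i (θ a)) := hD'comm _ _
          _ ≤ (s : ℝ≥0∞) + (r : ℝ≥0∞) := haux v hv a ha
          _ ≤ (s : ℝ≥0∞) + 2 * (r : ℝ≥0∞) := by
              gcongr
              calc (r : ℝ≥0∞) = 1 * r := (one_mul _).symm
                _ ≤ 2 * r := by gcongr <;> norm_num
      · calc D' (i (θ a)) (i (θ b))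
            ≤ D' (i (θ a)) a + D' a (i (θ b)) := hD'tri _ a _
          _ ≤ (r : ℝ≥0∞) + ((s : ℝ≥0∞) + (r : ℝ≥0∞)) := by
              refine add_le_add ?_ (haux a ha b hb)
              rw [hD'comm]; exact (hθE a (hσ ha)).2.le
          _ = (s : ℝ≥0∞) + 2 * (r : ℝ≥0∞) := by ring
    exact le_trans key (le_mul_of_one_le_left (zero_le) hm')
  · -- (iv)
    intro σ hσ
    rw [Set.image_image]
    have : ∀ a ∈ σ, θ (i a) = id a := fun a ha => hθi a (hσ ha)
    rw [Set.image_congr this, Set.image_id]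
end
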